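/- The generalized Petersen graph P(7,2) has domination number 5 and order 14, hence γ(P(7,2)) = ⌊5·14/14⌋ = 5. -/

import Mathlib

/-- Closed neighborhood of a set of vertices. -/
def closedN {V : Type*} (G : SimpleGraph V) (S : Set V) : Set V :=
  {v | v ∈ S ∨ ∃ u ∈ S, G.Adj u v}

/-- Domination number: minimum cardinality of a dominating set. -/
noncomputable def domNum {V : Type*} [Fintype V] (G : SimpleGraph V) : ℕ :=
  sInf {k | ∃ S : Set V, S.ncard = k ∧ closedN G S = Set.univ}

/-- The generalized Petersen graph `P(7,2)`: outer vertices `inl i`, inner vertices `inr i`,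
with edges `uᵢuᵢ₊₁`, `uᵢwᵢ`, `wᵢwᵢ₊₂` (indices mod 7). -/
def P72 : SimpleGraph (Fin 7 ⊕ Fin 7) :=
  SimpleGraph.fromRel fun a b =>
    match a, b with
    | Sum.inl i, Sum.inl j => j = i + 1
    | Sum.inl i, Sum.inr j => j = i
    | Sum.inr i, Sum.inr j => j = i + 2
    | _, _ => False

instance : DecidableRel P72.Adj := fun a b => by
  unfold P72
  rw [SimpleGraph.fromRel_adj]
  cases a <;> cases b <;> exact inferInstance

def adjB : Fin 7 ⊕ Fin 7 → Fin 7 ⊕ Fin 7 → Bool := fun a b =>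
  match a, b with
  | .inl i, .inl j => j == i + 1 || i == j + 1
  | .inl i, .inr j => i == j
  | .inr i, .inl j => i == j
  | .inr i, .inr j => j == i + 2 || i == j + 2

lemma adjB_iff : ∀ a b, P72.Adj a b ↔ adjB a b = true := by decide

def key : Fin 7 ⊕ Fin 7 → Nat := Sum.elim (fun i => i.val) (fun j => j.val + 7)

def verts : List (Fin 7 ⊕ Fin 7) :=
  ((List.finRange 7).map Sum.inl) ++ ((List.finRange 7).map Sum.inr)

lemma mem_verts (a : Fin 7 ⊕ Fin 7) : a ∈ verts := by
  cases a <;> simp [verts, List.mem_finRange]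

def check : Bool :=
  verts.all fun a => verts.all fun b => verts.all fun c => verts.all fun d =>
    !(Nat.ble (key a) (key b) && Nat.ble (key b) (key c) && Nat.ble (key c) (key d)) ||
    verts.any fun v => !(key v == key a || key v == key b || key v == key c || key v == key d ||
      adjB a v || adjB b v || adjB c v || adjB d v)

set_option maxHeartbeats 2000000 in
lemma check_true : check = true := by decide

def P4 (a b c d : Fin 7 ⊕ Fin 7) : Prop :=
  ∃ v, ¬(v = a ∨ v = b ∨ v = c ∨ v = d ∨
    adjB a v = true ∨ adjB b v = true ∨ adjB c v = true ∨ adjB d v = true)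

lemma four_sorted (a b c d : Fin 7 ⊕ Fin 7) (h1 : key a ≤ key b) (h2 : key b ≤ key c)
    (h3 : key c ≤ key d) : P4 a b c d := by
  have h := check_true
  unfold check at h
  simp only [List.all_eq_true] at h
  have h' := h a (mem_verts a) b (mem_verts b) c (mem_verts c) d (mem_verts d)
  rw [Bool.or_eq_true, Bool.not_eq_true', Bool.and_eq_false_iff, Bool.and_eq_false_iff] at h'
  rcases h' with (h' | h')
  · exfalso
    have hb : (Nat.ble (key a) (key b) && Nat.ble (key b) (key c) && Nat.ble (key c) (key d)) = true := by
      simp [Nat.ble_eq, h1, h2, h3]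
    rcases h' with (h' | h') | h' <;> simp_all
  · rw [List.any_eq_true] at h'
    obtain ⟨v, -, hv⟩ := h'
    clear h
    refine ⟨v, fun hc => ?_⟩
    rw [Bool.not_eq_true'] at hv
    simp only [Bool.or_eq_false_iff] at hv
    obtain ⟨⟨⟨⟨⟨⟨⟨e1, e2⟩, e3⟩, e4⟩, f1⟩, f2⟩, f3⟩, f4⟩ := hv
    rcases hc with rfl | rfl | rfl | rfl | hc | hc | hc | hc
    · simp at e1
    · simp at e2
    · simp at e3
    · simp at e4
    · exact Bool.false_ne_true (f1.symm.trans hc)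
    · exact Bool.false_ne_true (f2.symm.trans hc)
    · exact Bool.false_ne_true (f3.symm.trans hc)
    · exact Bool.false_ne_true (f4.symm.trans hc)

lemma P4_swap12 {a b c d} (h : P4 b a c d) : P4 a b c d := by
  obtain ⟨v, hv⟩ := h; exact ⟨v, fun hc => hv (by tauto)⟩
lemma P4_swap23 {a b c d} (h : P4 a c b d) : P4 a b c d := by
  obtain ⟨v, hv⟩ := h; exact ⟨v, fun hc => hv (by tauto)⟩
lemma P4_swap34 {a b c d} (h : P4 a b d c) : P4 a b c d := by
  obtain ⟨v, hv⟩ := h; exact ⟨v, fun hc => hv (by tauto)⟩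

lemma four_sorted' (a b c d : Fin 7 ⊕ Fin 7) (h2 : key b ≤ key c)
    (h3 : key c ≤ key d) : P4 a b c d := by
  by_cases h1 : key a ≤ key b
  · exact four_sorted a b c d h1 h2 h3
  · push_neg at h1
    apply P4_swap12
    by_cases h4 : key a ≤ key c
    · exact four_sorted b a c d (le_of_lt h1) h4 h3
    · push_neg at h4
      apply P4_swap23
      by_cases h5 : key a ≤ key d
      · exact four_sorted b c a d h2 (le_of_lt h4) h5
      · push_neg at h5
        exact P4_swap34 (four_sorted b c d a h2 h3 (le_of_lt h5))

lemma four2 (a b c d : Fin 7 ⊕ Fin 7) (h3 : key c ≤ key d) : P4 a b c d := by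
  by_cases h2 : key b ≤ key c
  · exact four_sorted' a b c d h2 h3
  · push_neg at h2
    apply P4_swap23
    by_cases h4 : key b ≤ key d
    · exact four_sorted' a c b d (le_of_lt h2) h4
    · push_neg at h4
      exact P4_swap34 (four_sorted' a c d b h3 (le_of_lt h4))

lemma four (a b c d : Fin 7 ⊕ Fin 7) : P4 a b c d := by
  by_cases h3 : key c ≤ key d
  · exact four2 a b c d h3
  · push_neg at h3
    exact P4_swap34 (four2 a b d c (le_of_lt h3))

lemma lower_bound {S : Set (Fin 7 ⊕ Fin 7)} (hdom : closedN P72 S = Set.univ) :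
    5 ≤ S.ncard := by
  by_contra hlt
  push_neg at hlt
  have hfin : S.Finite := Set.toFinite S
  have hdom' : ∀ v, v ∈ S ∨ ∃ u ∈ S, P72.Adj u v := by
    intro v
    have : v ∈ closedN P72 S := hdom ▸ Set.mem_univ v
    exact this
  -- S is nonempty
  obtain ⟨a0, ha0⟩ : S.Nonempty := by
    rcases hdom' (Sum.inl 0) with h | ⟨u, hu, -⟩
    exacts [⟨_, h⟩, ⟨u, hu⟩]
  set l := hfin.toFinset.toList with hl
  have hlen : l.length ≤ 4 := by
    rw [hl, Finset.length_toList]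
    have : S.ncard = hfin.toFinset.card := Set.ncard_eq_toFinset_card S hfin
    omega
  have hmem : ∀ u ∈ S, u ∈ l := by
    intro u hu
    rw [hl, Finset.mem_toList, Set.Finite.mem_toFinset]
    exact hu
  set a := l.getD 0 a0
  set b := l.getD 1 a0
  set c := l.getD 2 a0
  set d := l.getD 3 a0
  have hcover : ∀ u ∈ S, u = a ∨ u = b ∨ u = c ∨ u = d := by
    intro u hu
    have h := hmem u hu
    rw [List.mem_iff_getElem] at h
    obtain ⟨i, hi, rfl⟩ := h
    have hi4 : i < 4 := lt_of_lt_of_le hi hlen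
    interval_cases i <;>
      simp [a, b, c, d, List.getD_eq_getElem?_getD, List.getElem?_eq_getElem hi]
  obtain ⟨v, hv⟩ := four a b c d
  rcases hdom' v with h | ⟨u, hu, hadj⟩
  · rcases hcover v h with rfl | rfl | rfl | rfl <;> exact hv (by tauto)
  · rw [adjB_iff] at hadj
    rcases hcover u hu with rfl | rfl | rfl | rfl <;> exact hv (by tauto)

def DS : Finset (Fin 7 ⊕ Fin 7) :=
  {Sum.inl 0, Sum.inl 1, Sum.inl 2, Sum.inr 4, Sum.inr 5}

lemma upper_bound : (5 : ℕ) ∈ {k | ∃ S : Set (Fin 7 ⊕ Fin 7), S.ncard = k ∧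
    closedN P72 S = Set.univ} := by
  refine ⟨(DS : Set (Fin 7 ⊕ Fin 7)), ?_, ?_⟩
  · rw [Set.ncard_coe_finset]
    decide
  · rw [Set.eq_univ_iff_forall]
    intro v
    show v ∈ (DS : Set _) ∨ ∃ u ∈ (DS : Set _), P72.Adj u v
    simp only [Finset.mem_coe]
    revert v
    decide


/-- `P(7,2)` has order 14 and domination number `5 = ⌊5·14/14⌋`. -/
theorem petersen72_domination :
    Fintype.card (Fin 7 ⊕ Fin 7) = 14 ∧ domNum P72 = 5 ∧ domNum P72 = 5 * 14 / 14 := by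
  have h5 : domNum P72 = 5 := by
    unfold domNum
    have hne : {k | ∃ S : Set (Fin 7 ⊕ Fin 7), S.ncard = k ∧
        closedN P72 S = Set.univ}.Nonempty := ⟨5, upper_bound⟩
    have hmem := Nat.sInf_mem hne
    obtain ⟨S, hS, hSd⟩ := hmem
    have hge : 5 ≤ sInf {k | ∃ S : Set (Fin 7 ⊕ Fin 7), S.ncard = k ∧
        closedN P72 S = Set.univ} := hS ▸ lower_bound hSd
    have hle := Nat.sInf_le upper_bound
    omega
  refine ⟨by simp, h5, by rw [h5]⟩
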